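/- For every real ρ ∈ (0,1) and every ε > 0 there exist δ > 0 and N such that the following holds for all m ≥ N: if H is a simple graph on m vertices with at least ((1/2)ρ − δ)·m² edges and with Σ_{v ∈ V(H)} (deg(v) choose 2) ≤ ((1/2)ρ² + δ)·m³, then the number of vertices v of H with |deg(v) − ρm| > εm is at most εm. -/

import Mathlib

/-- The number of edges of a simple graph. -/
noncomputable def edgeCount {V : Type*} (G : SimpleGraph V) : ℕ :=
  Nat.card G.edgeSet

/-- The degree of a vertex (cardinality of its neighborhood). -/
noncomputable def deg {V : Type*} (G : SimpleGraph V) (v : V) : ℕ :=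
  Nat.card (G.neighborSet v)

set_option maxHeartbeats 1000000 in
/-- Almost regularity: for every `ρ ∈ (0,1)` and `ε > 0` there are `δ > 0` and `N` such
that every graph `H` on `m ≥ N` vertices with at least `(ρ/2 − δ)m²` edges and at most
`(ρ²/2 + δ)m³` paths on 3 vertices (i.e. `Σ_v C(deg v, 2)`) has at most `εm` vertices
whose degree differs from `ρm` by more than `εm`. -/
theorem almost_regular (ρ ε : ℝ) (hρ0 : 0 < ρ) (hρ1 : ρ < 1) (hε : 0 < ε) :
    ∃ δ : ℝ, 0 < δ ∧ ∃ N : ℕ, ∀ m : ℕ, N ≤ m → ∀ H : SimpleGraph (Fin m),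
      ((1/2) * ρ - δ) * (m:ℝ)^2 ≤ (edgeCount H : ℝ) →
      (∑ v : Fin m, ((deg H v).choose 2 : ℝ)) ≤ ((1/2) * ρ^2 + δ) * (m:ℝ)^3 →
      (Nat.card {v : Fin m | ε * (m:ℝ) < |(deg H v : ℝ) - ρ * (m:ℝ)|} : ℝ) ≤ ε * (m:ℝ) := by
  classical
  refine ⟨ε^3/12, by positivity, ⌈2/ε^3⌉₊ + 1, fun m hm H hE hP => ?_⟩
  have hm2 : 2/ε^3 ≤ (m:ℝ) := by
    calc 2/ε^3 ≤ (⌈2/ε^3⌉₊ : ℝ) := Nat.le_ceil _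
    _ ≤ (m:ℝ) := by exact_mod_cast le_trans (Nat.le_succ _) hm
  have hM : (0:ℝ) < (m:ℝ) := lt_of_lt_of_le (by positivity) hm2
  set M := (m:ℝ) with hMdef
  have hdeg : ∀ v, deg H v = H.degree v := fun v => by
    rw [deg, Nat.card_eq_fintype_card, SimpleGraph.card_neighborSet_eq_degree]
  set d : Fin m → ℝ := fun v => (H.degree v : ℝ) with hd
  -- handshake: sum of degrees = 2 * edgeCount
  have hedge : (edgeCount H : ℝ) = (H.edgeFinset.card : ℝ) := by
    rw [edgeCount, Nat.card_eq_fintype_card, SimpleGraph.edgeFinset, Set.toFinset_card]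
  have hhand : ∑ v, d v = 2 * (edgeCount H : ℝ) := by
    rw [hedge]
    simp only [hd]
    push_cast
    exact_mod_cast congrArg (Nat.cast : ℕ → ℝ) H.sum_degrees_eq_twice_card_edges
  have hS1low : (ρ - ε^3/6) * M^2 ≤ ∑ v, d v := by
    rw [hhand]; nlinarith [hE]
  have hdle : ∀ v, d v ≤ M := fun v => by
    have h : H.degree v ≤ m := le_trans (Finset.card_le_univ _) (by simp)
    simp only [hd, hMdef]
    exact_mod_cast h
  have hS1up : ∑ v, d v ≤ M * M := by
    calc ∑ v, d v ≤ ∑ _v : Fin m, M := Finset.sum_le_sum (fun v _ => hdle v)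
    _ = M * M := by simp [mul_comm]; exact Or.inl rfl
  -- second moment bound
  have hPd : ∑ v, (d v * (d v - 1) / 2) ≤ ((1/2) * ρ^2 + ε^3/12) * M^3 := by
    have : ∀ v : Fin m, ((deg H v).choose 2 : ℝ) = d v * (d v - 1) / 2 := fun v => by
      rw [hdeg v, Nat.cast_choose_two]
    calc ∑ v, (d v * (d v - 1) / 2) = ∑ v, ((deg H v).choose 2 : ℝ) :=
          (Finset.sum_congr rfl fun v _ => (this v).symm)
      _ ≤ _ := hP
  have hS2 : ∑ v, (d v)^2 ≤ (ρ^2 + ε^3/6) * M^3 + ∑ v, d v := by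
    have hsplit : ∑ v, (d v)^2 = 2 * ∑ v, (d v * (d v - 1) / 2) + ∑ v, d v := by
      rw [Finset.mul_sum, ← Finset.sum_add_distrib]
      exact Finset.sum_congr rfl fun v _ => by ring
    rw [hsplit]; nlinarith [hPd]
  have hexp : ∑ v, (d v - ρ*M)^2
      = ∑ v, (d v)^2 - 2*ρ*M*(∑ v, d v) + M*(ρ*M)^2 := by
    have h1 : ∀ v : Fin m, (d v - ρ*M)^2 = (d v)^2 - 2*ρ*M*(d v) + (ρ*M)^2 :=
      fun v => by ring
    rw [Finset.sum_congr rfl fun v _ => h1 v, Finset.sum_add_distrib,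
      Finset.sum_sub_distrib, ← Finset.mul_sum, Finset.sum_const, Finset.card_univ,
      Fintype.card_fin, nsmul_eq_mul]
  have hvar : ∑ v, (d v - ρ*M)^2 ≤ (ε^3/2) * M^3 + M^2 := by
    have hmul : 2*ρ*M*((ρ - ε^3/6) * M^2) ≤ 2*ρ*M*(∑ v, d v) :=
      mul_le_mul_of_nonneg_left hS1low (by positivity)
    nlinarith [hS2, hS1up, hexp, mul_pos (pow_pos hε 3) (pow_pos hM 3), sq_nonneg M,
      mul_nonneg (mul_nonneg (le_of_lt hε) (le_of_lt hε)) (le_of_lt hε),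
      mul_le_mul_of_nonneg_right (le_of_lt hρ1)
        (le_of_lt (mul_pos (pow_pos hε 3) (pow_pos hM 3)))]
  -- count the bad vertices
  set B : Finset (Fin m) :=
    Finset.univ.filter (fun v => ε * M < |(deg H v : ℝ) - ρ * M|) with hB
  have hcard : (Nat.card {v : Fin m | ε * M < |(deg H v : ℝ) - ρ * M|} : ℝ) = (B.card : ℝ) := by
    have hset : {v : Fin m | ε * M < |(deg H v : ℝ) - ρ * M|} = ↑B := by
      ext v; simp [hB]
    rw [hset, Nat.card_coe_set_eq, Set.ncard_coe_finset]
  have hBsum : (B.card : ℝ) * (ε*M)^2 ≤ ∑ v, (d v - ρ*M)^2 := by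
    have hterm : ∀ v ∈ B, (ε*M)^2 ≤ (d v - ρ*M)^2 := fun v hv => by
      have h := (Finset.mem_filter.mp hv).2
      rw [hdeg v] at h
      have h0 : 0 ≤ ε*M := by positivity
      nlinarith [sq_abs (d v - ρ*M), mul_self_le_mul_self h0 (le_of_lt h)]
    calc (B.card : ℝ) * (ε*M)^2 = B.card • (ε*M)^2 := (nsmul_eq_mul _ _).symm
      _ ≤ ∑ v ∈ B, (d v - ρ*M)^2 := Finset.card_nsmul_le_sum B _ _ hterm
      _ ≤ ∑ v, (d v - ρ*M)^2 :=
          Finset.sum_le_sum_of_subset_of_nonneg (Finset.subset_univ B)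
            (fun v _ _ => sq_nonneg _)
  rw [hcard]
  have h2 : 2 ≤ ε^3 * M := by
    have := (div_le_iff₀ (pow_pos hε 3)).mp hm2
    linarith
  have hfin : (B.card : ℝ) * (ε*M)^2 ≤ (ε*M) * (ε*M)^2 := by
    have h3 : 2 * M^2 ≤ ε^3 * M * M^2 := by nlinarith [sq_nonneg M]
    nlinarith [hBsum, hvar]
  exact le_of_mul_le_mul_right hfin (by positivity)
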